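/- Let R be a G-graded commutative ring, I a graded ideal, Λ_I the set of all graded maximal ideals of R containing I, and Q a homogeneous prime ideal such that Q ∩ h(R) ⊆ ⋃_{M ∈ Λ_I} M. Then Q ⊆ M for some M ∈ Λ_I. -/

import Mathlib

section GradedGelfand

variable {G : Type*} [AddGroup G] [DecidableEq G] {R : Type*} [CommRing R]
variable (𝒜 : G → AddSubgroup R) [GradedRing 𝒜]

/-- A homogeneous (graded) prime ideal: a proper graded ideal that is prime
with respect to homogeneous elements. -/
def IsGradedPrime (P : Ideal R) : Prop :=
  P.IsHomogeneous 𝒜 ∧ P ≠ ⊤ ∧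
    ∀ a b : R, SetLike.IsHomogeneousElem 𝒜 a → SetLike.IsHomogeneousElem 𝒜 b →
      a * b ∈ P → a ∈ P ∨ b ∈ P

/-- A graded maximal ideal: a proper graded ideal maximal among proper graded ideals. -/
def IsGradedMaximal (M : Ideal R) : Prop :=
  M.IsHomogeneous 𝒜 ∧ M ≠ ⊤ ∧
    ∀ J : Ideal R, J.IsHomogeneous 𝒜 → M ≤ J → J ≠ ⊤ → J = M

/-- The homogeneous prime spectrum of a graded ring. -/
def GSpec := { P : Ideal R // IsGradedPrime 𝒜 P }

/-- The Zariski topology on the homogeneous prime spectrum, generated by the basic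
open sets `D_G(r)` for homogeneous `r`; the closed sets are exactly the `V_G(I)`
for graded ideals `I`. -/
instance : TopologicalSpace (GSpec 𝒜) :=
  TopologicalSpace.generateFrom
    { U | ∃ r : R, SetLike.IsHomogeneousElem 𝒜 r ∧ U = { P : GSpec 𝒜 | r ∉ P.1 } }

/-- The set of graded maximal ideals inside the homogeneous prime spectrum. -/
def GMax : Set (GSpec 𝒜) := { P | IsGradedMaximal 𝒜 P.1 }

/-- A Gelfand graded ring: every homogeneous prime ideal is contained in a unique
graded maximal ideal. -/
def IsGelfandGraded : Prop :=
  ∀ P : Ideal R, IsGradedPrime 𝒜 P →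
    ∃! M : Ideal R, IsGradedMaximal 𝒜 M ∧ P ≤ M

/-- A pm⁺ graded ring: for every homogeneous prime `P`, the homogeneous primes
containing `P` form a chain. -/
def IsPMPlusGraded : Prop :=
  ∀ P Q Q' : Ideal R, IsGradedPrime 𝒜 P → IsGradedPrime 𝒜 Q → IsGradedPrime 𝒜 Q' →
    P ≤ Q → P ≤ Q' → Q ≤ Q' ∨ Q' ≤ Q

end GradedGelfand

section Statements

variable {G : Type*} [AddGroup G] [DecidableEq G] {R : Type*} [CommRing R]
variable (𝒜 : G → AddSubgroup R) [GradedRing 𝒜]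


theorem exists_gradedMaximal_ge {G : Type*} [AddGroup G] [DecidableEq G] {R : Type*}
    [CommRing R] (𝒜 : G → AddSubgroup R) [GradedRing 𝒜]
    (J : Ideal R) (hJ : J.IsHomogeneous 𝒜) (hJt : J ≠ ⊤) :
    ∃ M : Ideal R, IsGradedMaximal 𝒜 M ∧ J ≤ M := by
  have ih : ∀ c ⊆ {K : Ideal R | K.IsHomogeneous 𝒜 ∧ K ≠ ⊤}, IsChain (· ≤ ·) c →
      ∀ K ∈ c, ∃ ub ∈ {K : Ideal R | K.IsHomogeneous 𝒜 ∧ K ≠ ⊤}, ∀ z ∈ c, z ≤ ub := by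
    intro c hc hchain K hK
    refine ⟨sSup c, ⟨Ideal.IsHomogeneous.sSup fun I hI => (hc hI).1, fun htop => ?_⟩,
      fun z hz => le_sSup hz⟩
    have h1 : (1 : R) ∈ sSup c := htop ▸ Submodule.mem_top
    obtain ⟨I, hIc, h1I⟩ := (Submodule.mem_sSup_of_directed ⟨K, hK⟩ hchain.directedOn).1 h1
    exact (hc hIc).2 ((Ideal.eq_top_iff_one I).2 h1I)
  obtain ⟨M, hJM, hMmax⟩ := zorn_le_nonempty₀
    {K : Ideal R | K.IsHomogeneous 𝒜 ∧ K ≠ ⊤} ih J ⟨hJ, hJt⟩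
  exact ⟨M, ⟨hMmax.prop.1, hMmax.prop.2, fun K hK hMK hKt =>
    le_antisymm (hMmax.le_of_ge ⟨hK, hKt⟩ hMK) hMK⟩, hJM⟩

theorem stmt_1 (I : Ideal R) (hI : I.IsHomogeneous 𝒜)
    (Q : Ideal R) (hQ : IsGradedPrime 𝒜 Q)
    (h : ∀ r : R, SetLike.IsHomogeneousElem 𝒜 r → r ∈ Q →
      ∃ M : Ideal R, IsGradedMaximal 𝒜 M ∧ I ≤ M ∧ r ∈ M) :
    ∃ M : Ideal R, IsGradedMaximal 𝒜 M ∧ I ≤ M ∧ Q ≤ M := by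
  have hIQ : (I ⊔ Q) ≠ ⊤ := by
    intro htop
    have h1 : (1 : R) ∈ I ⊔ Q := htop ▸ Submodule.mem_top
    obtain ⟨a, ha, b, hb, hab⟩ := Submodule.mem_sup.1 h1
    -- take degree-0 components
    have ha0 : (DirectSum.decompose 𝒜 a 0 : R) ∈ I := hI 0 ha
    have hb0 : (DirectSum.decompose 𝒜 b 0 : R) ∈ Q := hQ.1 0 hb
    obtain ⟨M, hM, hIM, hbM⟩ := h _ ⟨0, SetLike.coe_mem _⟩ hb0
    have h1M : (1 : R) ∈ M := by
      have heq : (DirectSum.decompose 𝒜 a 0 : R) + (DirectSum.decompose 𝒜 b 0 : R)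
          = (DirectSum.decompose 𝒜 (a + b) 0 : R) := by
        rw [DirectSum.decompose_add, DirectSum.add_apply]; rfl
      have h1eq : (DirectSum.decompose 𝒜 a 0 : R) + (DirectSum.decompose 𝒜 b 0 : R) = 1 := by
        rw [heq, hab, DirectSum.decompose_of_mem_same 𝒜 SetLike.GradedOne.one_mem]
      exact h1eq ▸ M.add_mem (hIM ha0) hbM
    exact hM.2.1 ((Ideal.eq_top_iff_one M).2 h1M)
  obtain ⟨M, hM, hle⟩ := exists_gradedMaximal_ge 𝒜 (I ⊔ Q) (hI.sup hQ.1) hIQ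
  exact ⟨M, hM, le_trans le_sup_left hle, le_trans le_sup_right hle⟩
end Statements
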